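/- Let f, g be convex with f differentiable, and let x^k, x^{k-1} be consecutive iterates of the proximal gradient method with x^k = x^{k-1} - α_{k-1}(∇f(x^{k-1}) + u^k) where u^k ∈ ∂g(x^k). Then ⟨∇f(x^k) + u^k, ∇f(x^{k-1}) + u^k⟩ ≤ ‖∇f(x^{k-1}) + u^k‖². -/

import Mathlib

open scoped RealInnerProductSpace

private lemma grad_lower {d : ℕ}
    (f : EuclideanSpace ℝ (Fin d) → ℝ)
    (f' : EuclideanSpace ℝ (Fin d) → EuclideanSpace ℝ (Fin d))
    (hfconv : ConvexOn ℝ Set.univ f)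
    (hgrad : ∀ z, HasGradientAt f (f' z) z)
    (x y : EuclideanSpace ℝ (Fin d)) :
    f x + ⟪f' x, y - x⟫ ≤ f y := by
  set γ : ℝ → EuclideanSpace ℝ (Fin d) := fun t => x + t • (y - x) with hγ
  have hγd : ∀ t : ℝ, HasDerivAt γ (y - x) t := by
    intro t
    simpa [hγ] using ((hasDerivAt_id t).smul_const (y - x)).const_add x
  have hcomp : HasDerivAt (f ∘ γ) ⟪f' x, y - x⟫ 0 := by
    have h1 : HasFDerivAt f (InnerProductSpace.toDual ℝ _ (f' x)) (γ 0) := by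
      have := hgrad (γ 0)
      rw [HasGradientAt, HasGradientAtFilter] at this
      have hx0 : γ 0 = x := by simp [hγ]
      rw [hx0] at this ⊢
      exact this
    simpa using h1.comp_hasDerivAt 0 (hγd 0)
  have hconv : ConvexOn ℝ Set.univ (f ∘ γ) := by
    have : ConvexOn ℝ ((AffineMap.lineMap x y : ℝ →ᵃ[ℝ] _) ⁻¹' Set.univ)
        (f ∘ (AffineMap.lineMap x y : ℝ →ᵃ[ℝ] _)) :=
      hfconv.comp_affineMap _
    have heq : (f ∘ (AffineMap.lineMap x y : ℝ →ᵃ[ℝ] _)) = f ∘ γ := by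
      funext t
      simp [γ, AffineMap.lineMap_apply, Function.comp]
      rw [add_comm]
    rw [heq] at this
    simpa using this
  have := hconv.le_slope_of_hasDerivAt (Set.mem_univ 0) (Set.mem_univ 1)
    one_pos hcomp
  rw [slope_def_field] at this
  have h0 : γ 0 = x := by simp [hγ]
  have h1 : γ 1 = y := by simp [hγ]
  simp only [Function.comp, h0, h1] at this
  linarith

theorem prox_grad_inner_le {d : ℕ}
    (f g : EuclideanSpace ℝ (Fin d) → ℝ)
    (f' : EuclideanSpace ℝ (Fin d) → EuclideanSpace ℝ (Fin d))
    (hfconv : ConvexOn ℝ Set.univ f)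
    (hgconv : ConvexOn ℝ Set.univ g)
    (hglsc : LowerSemicontinuous g)
    (hgrad : ∀ z, HasGradientAt f (f' z) z)
    (α : ℝ) (hα : 0 < α)
    (xprev xk u : EuclideanSpace ℝ (Fin d))
    -- u = u^k ∈ ∂g(x^k) is the subgradient from the implicit proximal update
    (hu : ∀ y, g xk + ⟪u, y - xk⟫ ≤ g y)
    (hxk : xk = xprev - α • (f' xprev + u)) :
    ⟪f' xk + u, f' xprev + u⟫ ≤ ‖f' xprev + u‖ ^ 2 := by
  have h1 := grad_lower f f' hfconv hgrad xk xprev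
  have h2 := grad_lower f f' hfconv hgrad xprev xk
  have hmono : 0 ≤ ⟪f' xprev - f' xk, xprev - xk⟫ := by
    have : ⟪f' xk, xprev - xk⟫ + ⟪f' xprev, xk - xprev⟫ ≤ 0 := by linarith
    have hswap : ⟪f' xprev, xk - xprev⟫ = - ⟪f' xprev, xprev - xk⟫ := by
      rw [← inner_neg_right]; congr 1; abel
    rw [inner_sub_left]
    linarith [hswap ▸ this]
  have hdiff : xprev - xk = α • (f' xprev + u) := by rw [hxk]; abel
  rw [hdiff, real_inner_smul_right] at hmono
  have hkey : 0 ≤ ⟪f' xprev - f' xk, f' xprev + u⟫ := nonneg_of_mul_nonneg_right hmono hα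
  have : ⟪f' xprev - f' xk, f' xprev + u⟫
      = ⟪f' xprev + u, f' xprev + u⟫ - ⟪f' xk + u, f' xprev + u⟫ := by
    rw [inner_sub_left, inner_add_left, inner_add_left]; ring
  rw [this] at hkey
  rw [← real_inner_self_eq_norm_sq]
  linarith
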